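/- arXiv:2105.06322 — 3 statements merged into one kernel-verified Lean document; each statement's English description precedes it below -/
import Mathlib

section
/- Let G be the complete digraph on a finite vertex set V with n = |V| ≥ 2 (i.e., every ordered pair of distinct vertices is an arc), fix a leader L ∈ V and a premium p ≥ 0, and let R be the unique function satisfying the redemption-premium recurrence. Then the leader's total redemption premium R(L) := Σ_{u : (u, L) an arc} R((L), u) satisfies R(L) ≥ p · (n−1)!. Hence in the complete digraph the leader's premium grows at least factorially (in particular, exponentially) in the number of vertices. -/
/-!
A digraph on a finite vertex set `V` is given by its arc relation `A : V → V → Prop`,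
where arcs are ordered pairs of *distinct* vertices (irreflexivity hypothesis `hirr`).
A forward path is a nonempty list of pairwise-distinct vertices in which consecutive
vertices are joined by arcs; a forward cycle is such a list whose first and last
vertices coincide, all other vertices being pairwise distinct.
-/

/-- `l` is a forward path in the digraph with arc relation `A`. -/
def IsFwdPath {V : Type*} (A : V → V → Prop) (l : List V) : Prop :=
  l ≠ [] ∧ l.Nodup ∧ l.Chain' A

/-- `l` is a forward cycle in the digraph with arc relation `A`:
it has length at least 2 (`k ≥ 1`), its first and last vertices coincide,
all other vertices are pairwise distinct, and consecutive vertices are joined by arcs. -/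
def IsFwdCycle {V : Type*} (A : V → V → Prop) (l : List V) : Prop :=
  2 ≤ l.length ∧ l.head? = l.getLast? ∧ l.dropLast.Nodup ∧ l.Chain' A

instance {V : Type*} (A : V → V → Prop) [DecidableEq V] [DecidableRel A] (l : List V) :
    Decidable (IsFwdPath A l) := by unfold IsFwdPath List.Chain'; infer_instance

instance {V : Type*} (A : V → V → Prop) [DecidableEq V] [DecidableRel A] (l : List V) :
    Decidable (IsFwdCycle A l) := by unfold IsFwdCycle List.Chain'; infer_instance

/-- The domain of the redemption-premium function `R`: pairs `(q, v)` where `q` is a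
forward path ending at the leader `L` and `v || q` (i.e. `v :: q`) is a forward path
or a forward cycle. -/
def RDom {V : Type*} (A : V → V → Prop) (L : V) (q : List V) (v : V) : Prop :=
  IsFwdPath A q ∧ q.getLast? = some L ∧ (IsFwdPath A (v :: q) ∨ IsFwdCycle A (v :: q))

/-- `R` satisfies the redemption-premium recurrence on its domain:
`R(q, v) = p` if `v || q` is a forward cycle, and
`R(q, v) = p + Σ_u R(v || q, u)` if `v || q` is a forward path, the sum ranging over
vertices `u` with `(u, v)` an arc and `u || (v || q)` a forward path or forward cycle. -/
def SatisfiesRRec {V : Type*} [Fintype V] [DecidableEq V] (A : V → V → Prop)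
    [DecidableRel A] (L : V) (p : ℝ) (R : List V → V → ℝ) : Prop :=
  ∀ q v, RDom A L q v →
    (IsFwdCycle A (v :: q) → R q v = p) ∧
    (IsFwdPath A (v :: q) →
      R q v = p + ∑ u ∈ Finset.univ.filter
          (fun u => A u v ∧ (IsFwdPath A (u :: v :: q) ∨ IsFwdCycle A (u :: v :: q))),
          R (v :: q) u)

private lemma nodup_fwdPath {V : Type*} {l : List V} (h0 : l ≠ []) (h : l.Nodup) :
    IsFwdPath (fun u v : V => u ≠ v) l :=
  ⟨h0, h, List.Pairwise.isChain h⟩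

private lemma key_lemma {V : Type*} [Fintype V] [DecidableEq V]
    (hn : 2 ≤ Fintype.card V) (L : V) (p : ℝ) (hp : 0 ≤ p)
    (R : List V → V → ℝ)
    (hR : SatisfiesRRec (fun u v : V => u ≠ v) L p R) :
    ∀ (m : ℕ) (v : V) (q : List V), (v :: q).Nodup → (v :: q).getLast? = some L →
      Fintype.card V - (v :: q).length = m →
      p * (Nat.factorial m : ℝ) ≤
        ∑ u ∈ Finset.univ.filter
          (fun u => (fun a b : V => a ≠ b) u v ∧
            (IsFwdPath (fun a b : V => a ≠ b) (u :: v :: q) ∨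
             IsFwdCycle (fun a b : V => a ≠ b) (u :: v :: q))),
          R (v :: q) u := by
  intro m
  induction m with
  | zero =>
    intro v q hnd hlast hm
    set l := v :: q with hl
    have hlpath : IsFwdPath (fun u v : V => u ≠ v) l := nodup_fwdPath (by simp [hl]) hnd
    have hlen : l.length ≤ Fintype.card V := hnd.length_le_card
    have hlenn : l.length = Fintype.card V := by omega
    -- every vertex is in l
    have hall : ∀ u : V, u ∈ l := by
      have : l.toFinset = Finset.univ := by
        apply Finset.eq_univ_of_card
        rw [List.toFinset_card_of_nodup hnd, hlenn]
      intro u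
      have : u ∈ l.toFinset := this ▸ Finset.mem_univ u
      simpa using this
    -- q is nonempty and L ∈ q, v ≠ L
    have hq : q ≠ [] := by
      intro h
      subst h
      simp [hl] at hlenn
      omega
    have hlastq : q.getLast? = some L := by
      cases q with
      | nil => exact absurd rfl hq
      | cons b t => rw [hl, List.getLast?_cons_cons] at hlast; exact hlast
    have hLq : L ∈ q := by
      have := List.dropLast_append_getLast? L hlastq
      rw [← this]; simp
    have hvL : v ≠ L := fun h => (List.nodup_cons.mp hnd).1 (h ▸ hLq)
    have hLdrop : L ∉ l.dropLast := by
      have heq := List.dropLast_append_getLast? L hlast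
      have := hnd
      rw [← heq] at this
      have := List.disjoint_of_nodup_append this
      intro h
      exact this h (by simp)
    -- the cycle L :: l
    have hcyc : IsFwdCycle (fun a b : V => a ≠ b) (L :: l) := by
      refine ⟨by simp [hl], ?_, ?_, ?_⟩
      · rw [List.head?_cons, show (L :: l).getLast? = l.getLast? from List.getLast?_cons_cons, hlast]
      · rw [show (L :: l).dropLast = L :: l.dropLast from List.dropLast_cons₂]
        exact List.nodup_cons.mpr ⟨hLdrop, hnd.sublist l.dropLast_sublist⟩
      · exact List.isChain_cons_cons.mpr ⟨fun h => hvL h.symm, hlpath.2.2⟩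
    have hLmem : L ∈ Finset.univ.filter
        (fun u => (fun a b : V => a ≠ b) u v ∧
          (IsFwdPath (fun a b : V => a ≠ b) (u :: v :: q) ∨
           IsFwdCycle (fun a b : V => a ≠ b) (u :: v :: q))) := by
      simp only [Finset.mem_filter, Finset.mem_univ, true_and]
      exact ⟨fun h => hvL h.symm, Or.inr hcyc⟩
    -- every member of the filter gives R = p
    have hval : ∀ u ∈ Finset.univ.filter
        (fun u => (fun a b : V => a ≠ b) u v ∧
          (IsFwdPath (fun a b : V => a ≠ b) (u :: v :: q) ∨
           IsFwdCycle (fun a b : V => a ≠ b) (u :: v :: q))), R l u = p := by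
      intro u hu
      simp only [Finset.mem_filter, Finset.mem_univ, true_and] at hu
      obtain ⟨huv, hpc⟩ := hu
      have hcyc' : IsFwdCycle (fun a b : V => a ≠ b) (u :: l) := by
        rcases hpc with hpath | hc
        · exact absurd (List.nodup_cons.mp hpath.2.1).1 (not_not.mpr (hall u))
        · exact hc
      exact (hR l u ⟨hlpath, hlast, Or.inr hcyc'⟩).1 hcyc'
    calc p * (Nat.factorial 0 : ℝ) = R l L := by rw [hval L hLmem]; simp
      _ ≤ _ := Finset.single_le_sum (fun u hu => by rw [hval u hu]; exact hp) hLmem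
  | succ m ih =>
    intro v q hnd hlast hm
    set l := v :: q with hl
    have hlpath : IsFwdPath (fun u v : V => u ≠ v) l := nodup_fwdPath (by simp [hl]) hnd
    have hlen : l.length ≤ Fintype.card V := hnd.length_le_card
    set S := Finset.univ.filter
        (fun u => (fun a b : V => a ≠ b) u v ∧
          (IsFwdPath (fun a b : V => a ≠ b) (u :: v :: q) ∨
           IsFwdCycle (fun a b : V => a ≠ b) (u :: v :: q))) with hS
    set B := Finset.univ.filter (fun u : V => u ∉ l) with hB
    have hBcard : B.card = m + 1 := by
      have : B = Finset.univ \ l.toFinset := by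
        ext u; simp [hB]
      rw [this, Finset.card_sdiff_of_subset (Finset.subset_univ _), Finset.card_univ,
        List.toFinset_card_of_nodup hnd]
      omega
    have hBS : B ⊆ S := by
      intro u hu
      simp only [hB, Finset.mem_filter, Finset.mem_univ, true_and] at hu
      simp only [hS, Finset.mem_filter, Finset.mem_univ, true_and]
      refine ⟨fun h => hu (h ▸ (List.mem_cons_self : v ∈ v :: q)), Or.inl ?_⟩
      exact nodup_fwdPath (by simp) (List.nodup_cons.mpr ⟨hu, hnd⟩)
    -- values on B
    have hvalB : ∀ u ∈ B, p * (Nat.factorial m : ℝ) + p ≤ R l u := by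
      intro u hu
      simp only [hB, Finset.mem_filter, Finset.mem_univ, true_and] at hu
      have hpath : IsFwdPath (fun a b : V => a ≠ b) (u :: l) :=
        nodup_fwdPath (by simp) (List.nodup_cons.mpr ⟨hu, hnd⟩)
      have heq := (hR l u ⟨hlpath, hlast, Or.inl hpath⟩).2 hpath
      have hlast' : (u :: l).getLast? = some L := by
        rw [hl, List.getLast?_cons_cons]; exact hlast
      have hm' : Fintype.card V - (u :: l).length = m := by
        simp only [List.length_cons] at hm ⊢
        omega
      have := ih u (v :: q) (List.nodup_cons.mpr ⟨hu, hnd⟩) hlast' hm'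
      rw [heq]
      linarith
    -- values on S \ B are nonneg
    have hvalSB : ∀ u ∈ S, u ∉ B → R l u = p := by
      intro u huS huB
      simp only [hB, Finset.mem_filter, Finset.mem_univ, true_and, not_not] at huB
      simp only [hS, Finset.mem_filter, Finset.mem_univ, true_and] at huS
      obtain ⟨huv, hpc⟩ := huS
      have hcyc' : IsFwdCycle (fun a b : V => a ≠ b) (u :: l) := by
        rcases hpc with hpath | hc
        · exact absurd (List.nodup_cons.mp hpath.2.1).1 (not_not.mpr huB)
        · exact hc
      exact (hR l u ⟨hlpath, hlast, Or.inr hcyc'⟩).1 hcyc'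
    have hsplit : ∑ u ∈ S, R l u = ∑ u ∈ B, R l u + ∑ u ∈ S \ B, R l u := by
      rw [← Finset.sum_sdiff hBS]; ring
    have h1 : (m + 1 : ℝ) * (p * (Nat.factorial m : ℝ) + p) ≤ ∑ u ∈ B, R l u := by
      calc (m + 1 : ℝ) * (p * (Nat.factorial m : ℝ) + p)
          = ∑ _u ∈ B, (p * (Nat.factorial m : ℝ) + p) := by
            rw [Finset.sum_const, hBcard]; simp; ring
        _ ≤ ∑ u ∈ B, R l u := Finset.sum_le_sum hvalB
    have h2 : (0 : ℝ) ≤ ∑ u ∈ S \ B, R l u := by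
      apply Finset.sum_nonneg
      intro u hu
      rw [hvalSB u (Finset.mem_sdiff.mp hu).1 (Finset.mem_sdiff.mp hu).2]
      exact hp
    have hfac : p * (Nat.factorial (m + 1) : ℝ) ≤
        (m + 1 : ℝ) * (p * (Nat.factorial m : ℝ) + p) := by
      rw [Nat.factorial_succ]
      push_cast
      nlinarith [hp]
    linarith [hsplit ▸ add_le_add h1 h2]

/-- In the complete digraph on `n = |V| ≥ 2` vertices (every ordered
pair of distinct vertices is an arc), with leader `L` and premium `p ≥ 0`, the leader's
total redemption premium `R(L) = Σ_{u : (u, L) an arc} R((L), u)` is at least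
`p · (n − 1)!`: it grows at least factorially in the number of vertices. -/
theorem leader_premium_factorial_lower_bound {V : Type*} [Fintype V] [DecidableEq V]
    (hn : 2 ≤ Fintype.card V) (L : V) (p : ℝ) (hp : 0 ≤ p)
    (R : List V → V → ℝ)
    (hR : SatisfiesRRec (fun u v : V => u ≠ v) L p R) :
    p * (Nat.factorial (Fintype.card V - 1) : ℝ) ≤
      ∑ u ∈ Finset.univ.filter (fun u : V => u ≠ L), R [L] u := by
  have hkey := key_lemma hn L p hp R hR (Fintype.card V - 1) L [] (by simp)
    (by simp) (by simp)
  have hfilter : Finset.univ.filter (fun u : V => u ≠ L) =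
      Finset.univ.filter
        (fun u => (fun a b : V => a ≠ b) u L ∧
          (IsFwdPath (fun a b : V => a ≠ b) (u :: L :: []) ∨
           IsFwdCycle (fun a b : V => a ≠ b) (u :: L :: []))) := by
    apply Finset.filter_congr
    intro u _
    simp only [eq_iff_iff]
    constructor
    · intro h
      exact ⟨h, Or.inl (nodup_fwdPath (by simp) (by simp [h]))⟩
    · intro h
      exact h.1
  rw [hfilter]
  exact hkey
end

section
/- Let G be a finite digraph on a finite vertex set V, and let 𝓛 ⊆ V be a feedback vertex set of G, i.e., every directed cycle of G contains at least one vertex of 𝓛 (equivalently, the subgraph of G induced on V \ 𝓛 is acyclic). Let g : 𝓛 → ℝ be any function. Then there exists a unique function E assigning a real number to every arc (u, v) of G such that: E(u, v) = g(v) whenever v ∈ 𝓛, and E(u, v) = Σ_{w : (v, w) an arc of G} E(v, w) whenever v ∉ 𝓛. -/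
/-- `E` satisfies the escrow-premium recurrence determined by the leader set `𝓛` and
the leader premiums `g`: on each arc `(u, v)`, `E(u, v) = g(v)` if `v ∈ 𝓛`, and
`E(u, v) = Σ_{w : (v, w) an arc} E(v, w)` if `v ∉ 𝓛`. -/
def SatisfiesERec {V : Type*} [Fintype V] (A : V → V → Prop) [DecidableRel A]
    (𝓛 : Set V) (g : V → ℝ) (E : V → V → ℝ) : Prop :=
  ∀ u v, A u v →
    (v ∈ 𝓛 → E u v = g v) ∧
    (v ∉ 𝓛 → E u v = ∑ w ∈ Finset.univ.filter (fun w => A v w), E v w)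

section Aux

variable {V : Type*} {A : V → V → Prop} {𝓛 : Set V}

/-- Any closed walk contains a vertex of a feedback vertex set. -/
lemma aux_no_closed_walk
    (hFVS : ∀ l : List V, IsFwdCycle A l → ∃ x ∈ l, x ∈ 𝓛) :
    ∀ l : List V, l.Chain' A → 2 ≤ l.length → l.head? = l.getLast? →
      (∀ x ∈ l, x ∉ 𝓛) → False := by
  suffices H : ∀ n, ∀ l : List V, l.length ≤ n → l.Chain' A → 2 ≤ l.length →
      l.head? = l.getLast? → (∀ x ∈ l, x ∉ 𝓛) → False by
    intro l h1 h2 h3 h4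
    exact H l.length l le_rfl h1 h2 h3 h4
  intro n
  induction n with
  | zero => intro l hl _ h2 _ _; omega
  | succ n IH =>
    intro l hln hchain hlen hcl hout
    by_cases hnd : l.dropLast.Nodup
    · obtain ⟨x, hx, hxL⟩ := hFVS l ⟨hlen, hcl, hnd, hchain⟩
      exact hout x hx hxL
    · rw [List.nodup_iff_injective_get, Function.not_injective_iff] at hnd
      obtain ⟨a, b, hab, hne⟩ := hnd
      have key : ∃ i j : ℕ, ∃ (hi : i < l.dropLast.length) (hj : j < l.dropLast.length),
          i < j ∧ l.dropLast.get ⟨i, hi⟩ = l.dropLast.get ⟨j, hj⟩ := by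
        rcases lt_or_gt_of_ne hne with h' | h'
        · exact ⟨a, b, a.isLt, b.isLt, h', hab⟩
        · exact ⟨b, a, b.isLt, a.isLt, h', hab.symm⟩
      obtain ⟨i, j, hi, hj, hij, hget⟩ := key
      have hdl : l.dropLast.length = l.length - 1 := List.length_dropLast
      have hjl : j + 1 < l.length := by omega
      have hil : i < l.length := by omega
      -- the repeated-vertex values inside `l`
      have hgi : l.dropLast.get ⟨i, hi⟩ = l[i]'(by omega) := by
        simp [List.get_eq_getElem]
      have hgj : l.dropLast.get ⟨j, hj⟩ = l[j]'(by omega) := by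
        simp [List.get_eq_getElem]
      set k := j - i + 1 with hk
      set l' : List V := (l.drop i).take k with hl'
      have hinfix : l' <:+: l :=
        ⟨l.take i, (l.drop i).drop k, by
          rw [List.append_assoc, List.take_append_drop, List.take_append_drop]⟩
      have hlen' : l'.length = k := by
        simp only [hl', List.length_take, List.length_drop]
        omega
      have hgetl' : ∀ (m : ℕ) (hm : m < l'.length), l'[m]'hm = l[i + m]'(by
          simp only [hlen'] at hm; omega) := by
        intro m hm
        simp only [hl']
        rw [List.getElem_take, List.getElem_drop]
      have hhead' : l'.head? = some (l[i]'hil) := by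
        have h0 : 0 < l'.length := by omega
        rw [List.head?_eq_getElem?, List.getElem?_eq_getElem h0]
        congr 1
        simpa using hgetl' 0 h0
      have hlast' : l'.getLast? = some (l[i]'hil) := by
        have h0 : l'.length - 1 < l'.length := by omega
        rw [List.getLast?_eq_getElem?, List.getElem?_eq_getElem h0]
        congr 1
        rw [hgetl' _ h0]
        have : i + (l'.length - 1) = j := by omega
        rw [← hgi, hget, hgj]
        congr 1
      refine IH l' (by omega) (hchain.infix hinfix) (by omega) (hhead'.trans hlast'.symm) ?_
      intro x hx
      exact hout x (hinfix.subset hx)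

/-- The "needed-for" relation is well-founded when `𝓛` is a feedback vertex set. -/
lemma aux_wf
    (hFVS : ∀ l : List V, IsFwdCycle A l → ∃ x ∈ l, x ∈ 𝓛) [Finite V] :
    WellFounded (fun w v => v ∉ 𝓛 ∧ A v w) := by
  set R : V → V → Prop := fun w v => v ∉ 𝓛 ∧ A v w with hR
  have key : ∀ a b, Relation.TransGen R a b → ∃ l : List V, l.Chain' A ∧
      l.head? = some b ∧ l.getLast? = some a ∧ 2 ≤ l.length ∧
      ∀ x ∈ l.dropLast, x ∉ 𝓛 := by
    intro a b h
    induction h with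
    | single h =>
      refine ⟨[_, a], ?_, rfl, rfl, by simp, by simpa using h.1⟩
      simp [List.Chain', List.isChain_cons_cons, h.2]
    | tail hab hbc IH =>
      obtain ⟨l, hchain, hhead, hlast, hlen, hout⟩ := IH
      have hne : l ≠ [] := by rintro rfl; simp at hlen
      refine ⟨_ :: l, ?_, rfl, ?_, ?_, ?_⟩
      · show List.IsChain A (_ :: l); rw [List.isChain_cons]
        refine ⟨?_, hchain⟩
        intro y hy
        rw [hhead] at hy
        simp only [Option.mem_def, Option.some.injEq] at hy
        subst hy
        exact hbc.2
      · rw [List.getLast?_cons, hlast]; rfl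
      · simp; omega
      · rw [List.dropLast_cons_of_ne_nil hne]
        intro x hx
        rcases List.mem_cons.mp hx with rfl | hx
        · exact hbc.1
        · exact hout x hx
  have hirrT : ∀ v, ¬ Relation.TransGen R v v := by
    intro v hv
    obtain ⟨l, hchain, hhead, hlast, hlen, hout⟩ := key v v hv
    have hne : l ≠ [] := by rintro rfl; simp at hlen
    have hvlast : l.getLast hne = v := by
      have := List.getLast?_eq_getLast hne
      rw [hlast] at this
      exact (Option.some_injective _ this.symm)
    have hvdl : v ∈ l.dropLast := by
      obtain ⟨c, t, rfl⟩ := List.exists_cons_of_ne_nil hne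
      obtain rfl : c = v := by simpa using hhead
      have hnt : t ≠ [] := by rintro rfl; simp at hlen
      rw [List.dropLast_cons_of_ne_nil hnt]
      exact List.mem_cons_self
    refine aux_no_closed_walk hFVS l hchain hlen (hhead.trans hlast.symm) ?_
    intro x hx
    rw [← List.dropLast_append_getLast hne] at hx
    rcases List.mem_append.mp hx with hx | hx
    · exact hout x hx
    · obtain rfl : x = l.getLast hne := by simpa using hx
      rw [hvlast]
      exact hout v hvdl
  haveI : IsTrans V (Relation.TransGen R) := ⟨fun _ _ _ => Relation.TransGen.trans⟩
  haveI : IsIrrefl V (Relation.TransGen R) := ⟨hirrT⟩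
  exact Subrelation.wf (fun h => Relation.TransGen.single h)
    (Finite.wellFounded_of_trans_of_irrefl (Relation.TransGen R))

end Aux

/-- If `𝓛 ⊆ V` is a feedback vertex set of the finite digraph `G`
(every directed cycle of `G` contains a vertex of `𝓛`), then for any leader premiums
`g` there is a function `E` on arcs satisfying the escrow-premium recurrence, and it is
unique on the arcs of `G`. -/
theorem escrow_premium_exists_unique {V : Type*} [Fintype V]
    (A : V → V → Prop) [DecidableRel A] (hirr : ∀ u, ¬ A u u)
    (𝓛 : Set V) (hFVS : ∀ l : List V, IsFwdCycle A l → ∃ x ∈ l, x ∈ 𝓛)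
    (g : V → ℝ) :
    (∃ E : V → V → ℝ, SatisfiesERec A 𝓛 g E) ∧
    (∀ E₁ E₂ : V → V → ℝ, SatisfiesERec A 𝓛 g E₁ → SatisfiesERec A 𝓛 g E₂ →
      ∀ u v, A u v → E₁ u v = E₂ u v) := by
  classical
  have hwf : WellFounded (fun w v => v ∉ 𝓛 ∧ A v w) := aux_wf hFVS
  constructor
  · -- existence
    set F : V → ℝ := hwf.fix (fun v IH =>
      if h : v ∈ 𝓛 then g v
      else ∑ w ∈ (Finset.univ.filter (fun w => A v w)).attach,
        IH w.1 ⟨h, (Finset.mem_filter.mp w.2).2⟩) with hFdef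
    have hFeq : ∀ v, F v =
        if h : v ∈ 𝓛 then g v
        else ∑ w ∈ Finset.univ.filter (fun w => A v w), F w := by
      intro v
      rw [hFdef, WellFounded.fix_eq]
      split
      · rfl
      · exact Finset.sum_attach _ _
    refine ⟨fun _ v => F v, fun u v _ => ⟨fun hv => ?_, fun hv => ?_⟩⟩
    · show F v = g v
      rw [hFeq v, dif_pos hv]
    · show F v = ∑ w ∈ Finset.univ.filter (fun w => A v w), F w
      rw [hFeq v, dif_neg hv]
  · -- uniqueness
    intro E₁ E₂ h₁ h₂ u v huv
    induction v using hwf.induction generalizing u with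
    | _ v IH =>
      by_cases hv : v ∈ 𝓛
      · rw [(h₁ u v huv).1 hv, (h₂ u v huv).1 hv]
      · rw [(h₁ u v huv).2 hv, (h₂ u v huv).2 hv]
        refine Finset.sum_congr rfl fun w hw => ?_
        exact IH w ⟨hv, (Finset.mem_filter.mp hw).2⟩ v (Finset.mem_filter.mp hw).2
end

section
/- Let G be a finite digraph on a finite vertex set V, let 𝓛 ⊆ V be a feedback vertex set of G, let g : 𝓛 → ℝ, and let E be the unique function on arcs satisfying E(u, v) = g(v) for v ∈ 𝓛 and E(u, v) = Σ_{w : (v, w) an arc} E(v, w) for v ∉ 𝓛. Then for every arc (u, v) of G: E(u, v) = Σ g(x_m), where the sum ranges over all finite sequences (x_0, x_1, …, x_m) of vertices with m ≥ 0, x_0 = v, (x_i, x_{i+1}) an arc of G for each 0 ≤ i < m, x_0, …, x_{m−1} ∉ 𝓛, and x_m ∈ 𝓛. (In particular the sum is finite, since the subgraph induced on V \ 𝓛 is acyclic, and E(u, v) does not depend on u.) -/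
namespace EscrowAux

variable {V : Type*}

lemma exists_dup_split {d : List V} (h : ¬ d.Nodup) :
    ∃ (a : V) (p q r : List V), d = p ++ a :: q ++ a :: r := by
  induction d with
  | nil => simp at h
  | cons b t ih =>
    by_cases hb : b ∈ t
    · obtain ⟨q, r, rfl⟩ := List.append_of_mem hb
      exact ⟨b, [], q, r, rfl⟩
    · have ht : ¬ t.Nodup := by
        intro hnd; exact h (List.nodup_cons.mpr ⟨hb, hnd⟩)
      obtain ⟨a, p, q, r, rfl⟩ := ih ht
      exact ⟨a, b :: p, q, r, rfl⟩

variable (A : V → V → Prop) (𝓛 : Set V)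

lemma closedWalk_leader (hFVS : ∀ l : List V, IsFwdCycle A l → ∃ x ∈ l, x ∈ 𝓛) :
    ∀ (n : ℕ) (l : List V), l.length ≤ n → l.Chain' A → 2 ≤ l.length →
      l.head? = l.getLast? → ∃ x ∈ l, x ∈ 𝓛 := by
  intro n
  induction n with
  | zero => intro l h1 _ h2 _; omega
  | succ n ih =>
    intro l hlen hch hl2 hcl
    by_cases hnd : l.dropLast.Nodup
    · exact hFVS l ⟨hl2, hcl, hnd, hch⟩
    · obtain ⟨a, p, q, r, hd⟩ := exists_dup_split hnd
      have hinf1 : ((a :: q) ++ [a]) <:+: l.dropLast :=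
        ⟨p, r, by rw [hd]; simp⟩
      have hinf : ((a :: q) ++ [a]) <:+: l := hinf1.trans (l.dropLast_prefix).isInfix
      have hlen1 : ((a :: q) ++ [a]).length ≤ l.dropLast.length := hinf1.length_le
      have hld : l.dropLast.length = l.length - 1 := List.length_dropLast
      have hch' : ((a :: q) ++ [a]).Chain' A := hch.infix hinf
      obtain ⟨x, hx, hxL⟩ := ih ((a :: q) ++ [a]) (by omega) hch' (by simp)
        (by rw [List.getLast?_concat]; rfl)
      exact ⟨x, hinf.sublist.subset hx, hxL⟩

lemma chain_nodup (hFVS : ∀ l : List V, IsFwdCycle A l → ∃ x ∈ l, x ∈ 𝓛)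
    {l : List V} (hch : l.Chain' A) (hnl : ∀ x ∈ l, x ∉ 𝓛) : l.Nodup := by
  by_contra h
  obtain ⟨a, p, q, r, rfl⟩ := exists_dup_split h
  have hinf : ((a :: q) ++ [a]) <:+: (p ++ a :: q ++ a :: r) := ⟨p, r, by simp⟩
  obtain ⟨x, hx, hxL⟩ := closedWalk_leader A 𝓛 hFVS ((a :: q) ++ [a]).length _ le_rfl
    (hch.infix hinf) (by simp) (by rw [List.getLast?_concat]; rfl)
  exact hnl x (hinf.sublist.subset hx) hxL

lemma wf_R [Finite V] (hFVS : ∀ l : List V, IsFwdCycle A l → ∃ x ∈ l, x ∈ 𝓛) :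
    WellFounded (fun w v : V => A v w ∧ v ∉ 𝓛) := by
  set R : V → V → Prop := fun w v => A v w ∧ v ∉ 𝓛 with hR
  have walk : ∀ a b : V, Relation.TransGen R a b → ∃ l : List V, l.head? = some b ∧
      l.getLast? = some a ∧ 2 ≤ l.length ∧ l.Chain' A ∧ ∀ y ∈ l.dropLast, y ∉ 𝓛 := by
    intro a b h
    induction h with
    | @single c hab =>
      refine ⟨[c, a], rfl, by simp, by simp, List.isChain_pair.mpr hab.1, ?_⟩
      intro y hy
      have : y = c := by simpa using hy
      subst this
      exact hab.2
    | @tail b' c h1 h2 ih =>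
      obtain ⟨l, hh, hl, h2len, hch, hnl⟩ := ih
      obtain ⟨t, rfl⟩ : ∃ t, l = b' :: t := by
        cases l with
        | nil => simp at hh
        | cons b0 t => exact ⟨t, by simpa using hh⟩
      cases t with
      | nil => simp at h2len
      | cons d t' =>
        refine ⟨c :: b' :: d :: t', rfl, by
            rw [List.getLast?_cons_cons]; exact hl, by simp, ?_, ?_⟩
        · exact List.isChain_cons_cons.mpr ⟨h2.1, hch⟩
        · intro y hy
          rw [List.dropLast_cons₂] at hy
          rcases List.mem_cons.mp hy with rfl | hy'
          · exact h2.2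
          · exact hnl y hy'
  have hirr' : ∀ x : V, ¬ Relation.TransGen R x x := by
    intro x hx
    obtain ⟨l, hh, hl, h2len, hch, hnl⟩ := walk x x hx
    obtain ⟨y, hy, hyL⟩ := closedWalk_leader A 𝓛 hFVS l.length l le_rfl hch h2len
      (by rw [hh, hl])
    have hne : l ≠ [] := by rintro rfl; simp at hh
    obtain ⟨t0, rfl⟩ : ∃ t0, l = x :: t0 := by
      cases l with
      | nil => simp at hh
      | cons b0 t => exact ⟨t, by simpa using hh⟩
    have hxnl : x ∉ 𝓛 := by
      cases t0 with
      | nil => simp at h2len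
      | cons d t' => exact hnl x (by rw [List.dropLast_cons₂]; exact List.mem_cons_self)
    have hall : ∀ z ∈ x :: t0, z ∉ 𝓛 := by
      intro z hz
      rw [← List.dropLast_concat_getLast hne] at hz
      rcases List.mem_append.mp hz with hz' | hz'
      · exact hnl z hz'
      · have hz'' : z = (x :: t0).getLast hne := by simpa using hz'
        have hgl : (x :: t0).getLast hne = x := by
          have h5 := List.getLast?_eq_getLast (l := x :: t0) hne
          rw [hl] at h5; exact (Option.some_inj.mp h5).symm
        rw [hz'', hgl]; exact hxnl
    exact hall y hy hyL
  have hwf : WellFounded (Relation.TransGen R) := by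
    haveI : IsTrans V (Relation.TransGen R) := ⟨fun _ _ _ => Relation.TransGen.trans⟩
    haveI : IsIrrefl V (Relation.TransGen R) := ⟨hirr'⟩
    exact Finite.wellFounded_of_trans_of_irrefl _
  exact Subrelation.wf (fun h => Relation.TransGen.single h) hwf

def PathsTo (v : V) : Set (List V) :=
  {l : List V | l.head? = some v ∧ l.Chain' A ∧
    (∀ x ∈ l.dropLast, x ∉ 𝓛) ∧ (∀ x, l.getLast? = some x → x ∈ 𝓛)}

lemma pathsTo_finite [Fintype V] (hFVS : ∀ l : List V, IsFwdCycle A l → ∃ x ∈ l, x ∈ 𝓛)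
    (v : V) : (PathsTo A 𝓛 v).Finite := by
  apply (List.finite_length_le V (Fintype.card V + 1)).subset
  rintro l ⟨hh, hch, hnl, hlast⟩
  have hnd : l.dropLast.Nodup :=
    chain_nodup A 𝓛 hFVS (hch.prefix (List.dropLast_prefix l)) hnl
  have h1 := hnd.length_le_card
  have h2 : l.dropLast.length = l.length - 1 := List.length_dropLast
  have h3 : l ≠ [] := by rintro rfl; simp at hh
  have h4 : 0 < l.length := List.length_pos_iff.mpr h3
  simp only [Set.mem_setOf_eq]
  omega

end EscrowAux

/-- Let `𝓛` be a feedback vertex set of the finite digraph `G` and let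
`E` satisfy the escrow-premium recurrence for leader premiums `g`. Then for every arc
`(u, v)`, `E(u, v) = Σ g(x_m)`, the sum ranging over all finite sequences
`(x_0, …, x_m)` of vertices (modelled as nonempty lists `l`, summed via `∑ᶠ`; the sum
has finite support since the subgraph induced on `V \ 𝓛` is acyclic) with `m ≥ 0`,
`x_0 = v`, `(x_i, x_{i+1})` an arc for each `0 ≤ i < m`, `x_0, …, x_{m−1} ∉ 𝓛`, and
`x_m ∈ 𝓛`; each such sequence contributes `g` of its last vertex `x_m`. -/
theorem escrow_premium_eq_sum_over_paths_to_leaders {V : Type*} [Fintype V]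
    (A : V → V → Prop) [DecidableRel A] (hirr : ∀ u, ¬ A u u)
    (𝓛 : Set V) (hFVS : ∀ l : List V, IsFwdCycle A l → ∃ x ∈ l, x ∈ 𝓛)
    (g : V → ℝ) (E : V → V → ℝ) (hE : SatisfiesERec A 𝓛 g E)
    (u v : V) (huv : A u v) :
    E u v = ∑ᶠ l ∈ {l : List V | l.head? = some v ∧ l.Chain' A ∧
        (∀ x ∈ l.dropLast, x ∉ 𝓛) ∧ (∀ x, l.getLast? = some x → x ∈ 𝓛)},
      ((l.getLast?.map g).getD 0) := by
  classical
  set wt : List V → ℝ := fun l => ((l.getLast?.map g).getD 0) with hwt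
  have hPf : ∀ x : V, (EscrowAux.PathsTo A 𝓛 x).Finite :=
    EscrowAux.pathsTo_finite A 𝓛 hFVS
  have key : ∀ v : V, ∀ u : V, A u v →
      E u v = ∑ᶠ l ∈ EscrowAux.PathsTo A 𝓛 v, wt l := by
    refine fun v => (EscrowAux.wf_R A 𝓛 hFVS).induction
      (C := fun v => ∀ u : V, A u v → E u v = ∑ᶠ l ∈ EscrowAux.PathsTo A 𝓛 v, wt l) v ?_
    intro v ih u huv
    by_cases hvL : v ∈ 𝓛
    · rw [(hE u v huv).1 hvL]
      have hset : EscrowAux.PathsTo A 𝓛 v = {[v]} := by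
        ext l
        constructor
        · rintro ⟨hh, hch, hnl, hlast⟩
          obtain ⟨t, rfl⟩ : ∃ t, l = v :: t := by
            cases l with
            | nil => simp at hh
            | cons b t => exact ⟨t, by simpa using hh⟩
          cases t with
          | nil => rfl
          | cons c t' =>
            exact absurd hvL (hnl v (by rw [List.dropLast_cons₂]; exact List.mem_cons_self))
        · rintro rfl
          exact ⟨rfl, List.isChain_singleton v, by simp, fun x hx => by
            simp only [List.getLast?_singleton, Option.some_inj] at hx; subst hx; exact hvL⟩
      rw [hset, finsum_mem_singleton]
      simp [hwt]
    · rw [(hE u v huv).2 hvL]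
      have hrec : ∀ w ∈ Finset.univ.filter (fun w => A v w),
          E v w = ∑ l ∈ (hPf w).toFinset, wt l := by
        intro w hw
        simp only [Finset.mem_filter, Finset.mem_univ, true_and] at hw
        rw [ih w ⟨hw, hvL⟩ v hw, finsum_mem_eq_finite_toFinset_sum _ (hPf w)]
      rw [Finset.sum_congr rfl hrec, finsum_mem_eq_finite_toFinset_sum _ (hPf v)]
      have hU : (hPf v).toFinset = (Finset.univ.filter (fun w => A v w)).biUnion
          (fun w => ((hPf w).toFinset).image (v :: ·)) := by
        ext l
        simp only [Set.Finite.mem_toFinset, Finset.mem_biUnion, Finset.mem_filter,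
          Finset.mem_univ, true_and, Finset.mem_image]
        constructor
        · rintro ⟨hh, hch, hnl, hlast⟩
          obtain ⟨t, rfl⟩ : ∃ t, l = v :: t := by
            cases l with
            | nil => simp at hh
            | cons b t => exact ⟨t, by simpa using hh⟩
          cases t with
          | nil =>
            exact absurd (hlast v (by simp)) hvL
          | cons c t' =>
            have hcc := List.isChain_cons_cons.mp hch
            refine ⟨c, hcc.1, c :: t', ⟨rfl, hcc.2, ?_, ?_⟩, rfl⟩
            · intro x hx
              exact hnl x (by rw [List.dropLast_cons₂]; exact List.mem_cons_of_mem _ hx)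
            · intro x hx
              exact hlast x (by rw [List.getLast?_cons_cons]; exact hx)
        · rintro ⟨w, hw, l', ⟨hh', hch', hnl', hlast'⟩, rfl⟩
          cases l' with
          | nil => simp at hh'
          | cons c t' =>
            have hc : c = w := by simpa using hh'
            refine ⟨rfl, List.isChain_cons_cons.mpr ⟨by rw [hc]; exact hw, hch'⟩, ?_, ?_⟩
            · intro x hx
              rw [List.dropLast_cons₂] at hx
              rcases List.mem_cons.mp hx with rfl | hx'
              · exact hvL
              · exact hnl' x hx'
            · intro x hx
              rw [List.getLast?_cons_cons] at hx
              exact hlast' x hx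
      have hdisj : ((Finset.univ.filter (fun w => A v w)) : Set V).PairwiseDisjoint
          (fun w => ((hPf w).toFinset).image (v :: ·)) := by
        intro w1 h1 w2 h2 hne
        simp only [Function.onFun]
        rw [Finset.disjoint_left]
        rintro l hl1 hl2
        simp only [Finset.mem_image, Set.Finite.mem_toFinset] at hl1 hl2
        obtain ⟨l1, hl1m, rfl⟩ := hl1
        obtain ⟨l2, hl2m, heq⟩ := hl2
        have : l2 = l1 := by injection heq
        subst this
        have e1 : l2.head? = some w1 := hl1m.1
        have e2 : l2.head? = some w2 := hl2m.1
        rw [e1] at e2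
        exact hne (Option.some_inj.mp e2)
      rw [hU, Finset.sum_biUnion hdisj]
      refine Finset.sum_congr rfl fun w hw => ?_
      rw [Finset.sum_image (fun a _ b _ h => by injection h)]
      refine Finset.sum_congr rfl fun l hl => ?_
      simp only [Set.Finite.mem_toFinset] at hl
      cases l with
      | nil => exact absurd hl.1 (by simp)
      | cons c t' => simp only [hwt, List.getLast?_cons_cons]
  exact key v u huv
end
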